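/- For every integer n ≥ 1 and every y ∈ ℝ, (1/(4π)) ∫_{-π}^{π} (sin(x) sin(n x)) / (cosh(y) - cos(x)) dx = (1/2) e^{-n|y|}, provided y ≠ 0. -/

import Mathlib

open Real MeasureTheory

private lemma denomPos {t : ℝ} (ht : 0 < t) (x : ℝ) : 0 < Real.cosh t - Real.cos x := by
  have h1 := Real.cos_le_one x
  have h2 : 1 < Real.cosh t := Real.one_lt_cosh.mpr (ne_of_gt ht)
  linarith

private lemma integrableAux {t : ℝ} (ht : 0 < t) (g : ℝ → ℝ) (hg : Continuous g) :
    IntervalIntegrable (fun x => g x / (Real.cosh t - Real.cos x)) volume (-π) π := by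
  apply Continuous.intervalIntegrable
  exact hg.div (continuous_const.sub Real.continuous_cos) (fun x => (denomPos ht x).ne')

private lemma hasDerivF {t : ℝ} (ht : 0 < t) (x : ℝ) :
    HasDerivAt (fun x => x + 2 * Real.arctan (Real.exp (-t) * Real.sin x / (1 - Real.exp (-t) * Real.cos x)))
      (Real.sinh t / (Real.cosh t - Real.cos x)) x := by
  set r := Real.exp (-t) with hrdef
  have hr0 : 0 < r := Real.exp_pos _
  have hr1 : r < 1 := by
    rw [hrdef, Real.exp_lt_one_iff]; linarith
  have hcx := Real.cos_le_one x
  have hcx' := Real.neg_one_le_cos x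
  have hden : 0 < 1 - r * Real.cos x := by nlinarith
  have hden2 : 0 < 1 - 2 * r * Real.cos x + r ^ 2 := by nlinarith
  have hnum : HasDerivAt (fun x => r * Real.sin x) (r * Real.cos x) x :=
    (Real.hasDerivAt_sin x).const_mul r
  have hden' : HasDerivAt (fun x => 1 - r * Real.cos x) (r * Real.sin x) x := by
    have h := (Real.hasDerivAt_cos x).const_mul r
    have h2 := (hasDerivAt_const x (1:ℝ)).sub h
    exact h2.congr_deriv (by ring)
  have hu := hnum.div hden' hden.ne'
  have harc := (Real.hasDerivAt_arctan (r * Real.sin x / (1 - r * Real.cos x))).comp x hu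
  have hF := (hasDerivAt_id x).add (harc.const_mul 2)
  have hrt : Real.exp t = r⁻¹ := by
    rw [hrdef, ← Real.exp_neg, neg_neg]
  have hsq := Real.sin_sq_add_cos_sq x
  refine hF.congr_deriv ?_
  symm
  have h2 : r * Real.cos x * (1 - r * Real.cos x) - r * Real.sin x * (r * Real.sin x)
      = r * Real.cos x - r ^ 2 := by linear_combination (-(r^2)) * hsq
  have h1 : 1 + (r * Real.sin x / (1 - r * Real.cos x)) ^ 2
      = (1 - 2 * r * Real.cos x + r ^ 2) / (1 - r * Real.cos x) ^ 2 := by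
    field_simp
    linear_combination (r^2) * hsq
  rw [h1, h2, Real.sinh_eq, Real.cosh_eq, hrt, ← hrdef]
  have hden3 : 0 < (r⁻¹ + r) / 2 - Real.cos x := by
    have hsq1 : 0 < (1 - r) ^ 2 := by
      have : (0:ℝ) < 1 - r := by linarith
      positivity
    have h2r : 2 * r < 1 + r ^ 2 := by nlinarith
    have : 2 < r⁻¹ + r := by
      rw [show r⁻¹ + r = (1 + r ^ 2) / r by field_simp, lt_div_iff₀ hr0]
      linarith
    linarith
  rw [div_eq_iff hden3.ne']
  have e1 := hden.ne'
  have e2 := hden2.ne'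
  have e3 := hr0.ne'
  field_simp
  have e4 : 1 + r ^ 2 - r * 2 * Real.cos x = 1 - r * 2 * Real.cos x + r ^ 2 := by ring
  have e5 : 1 - r * 2 * Real.cos x + r ^ 2 ≠ 0 := by linarith
  rw [e4]
  field_simp
  ring

private lemma I0 {t : ℝ} (ht : 0 < t) :
    ∫ x in (-π)..π, 1 / (Real.cosh t - Real.cos x) = 2 * π / Real.sinh t := by
  have hs : 0 < Real.sinh t := Real.sinh_pos_iff.mpr ht
  have key : ∫ x in (-π)..π, Real.sinh t / (Real.cosh t - Real.cos x) = 2 * π := by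
    rw [intervalIntegral.integral_eq_sub_of_hasDerivAt (fun x _ => hasDerivF ht x)
      (integrableAux ht _ continuous_const)]
    simp only [Real.sin_pi, Real.sin_neg, neg_zero, mul_zero, zero_div, Real.arctan_zero,
      add_zero]
    ring
  have heq : ∀ x : ℝ, 1 / (Real.cosh t - Real.cos x)
      = (Real.sinh t)⁻¹ * (Real.sinh t / (Real.cosh t - Real.cos x)) := by
    intro x
    field_simp
  rw [intervalIntegral.integral_congr (fun x _ => heq x), intervalIntegral.integral_const_mul, key]
  field_simp

private lemma intCosZero (k : ℕ) (hk : 1 ≤ k) :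
    ∫ x in (-π)..π, Real.cos ((k : ℝ) * x) = 0 := by
  have hk' : ((k : ℝ)) ≠ 0 := by positivity
  rw [intervalIntegral.integral_comp_mul_left (fun x => Real.cos x) hk']
  rw [integral_cos]
  have h1 : Real.sin ((k : ℝ) * π) = 0 := Real.sin_nat_mul_pi k
  have h2 : Real.sin ((k : ℝ) * (-π)) = 0 := by
    rw [mul_neg, Real.sin_neg, h1, neg_zero]
  rw [h1, h2]
  simp

private lemma Ik {t : ℝ} (ht : 0 < t) (k : ℕ) :
    ∫ x in (-π)..π, Real.cos ((k : ℝ) * x) / (Real.cosh t - Real.cos x)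
      = 2 * π * Real.exp (-(k : ℝ) * t) / Real.sinh t := by
  have hs : 0 < Real.sinh t := Real.sinh_pos_iff.mpr ht
  have hD : ∀ x : ℝ, Real.cosh t - Real.cos x ≠ 0 := fun x => (denomPos ht x).ne'
  have hP0 : ∫ x in (-π)..π, Real.cos ((0 : ℝ) * x) / (Real.cosh t - Real.cos x)
      = 2 * π * Real.exp (-(0 : ℝ) * t) / Real.sinh t := by
    simp only [zero_mul, Real.cos_zero, neg_zero, Real.exp_zero, mul_one]
    rw [I0 ht]
  have hP1 : ∫ x in (-π)..π, Real.cos ((1 : ℝ) * x) / (Real.cosh t - Real.cos x)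
      = 2 * π * Real.exp (-(1 : ℝ) * t) / Real.sinh t := by
    have heq : ∀ x : ℝ, Real.cos ((1 : ℝ) * x) / (Real.cosh t - Real.cos x)
        = Real.cosh t * (1 / (Real.cosh t - Real.cos x)) - 1 := by
      intro x
      rw [one_mul]
      field_simp [hD x]
      ring
    rw [intervalIntegral.integral_congr (fun x _ => heq x)]
    rw [intervalIntegral.integral_sub
      (by simpa using (integrableAux ht (fun _ => (1:ℝ)) continuous_const).const_mul (Real.cosh t))
      (intervalIntegrable_const)]
    rw [intervalIntegral.integral_const_mul, I0 ht, intervalIntegral.integral_const]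
    have hexp : Real.exp (-(1:ℝ) * t) = Real.cosh t - Real.sinh t := by
      rw [Real.cosh_sub_sinh]; norm_num
    rw [hexp]
    field_simp
    ring
  -- two-step induction
  suffices h : ∀ m : ℕ,
      (∫ x in (-π)..π, Real.cos ((m : ℝ) * x) / (Real.cosh t - Real.cos x)
        = 2 * π * Real.exp (-(m : ℝ) * t) / Real.sinh t) ∧
      (∫ x in (-π)..π, Real.cos (((m + 1 : ℕ) : ℝ) * x) / (Real.cosh t - Real.cos x)
        = 2 * π * Real.exp (-((m + 1 : ℕ) : ℝ) * t) / Real.sinh t) by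
    exact (h k).1
  intro m
  induction m with
  | zero =>
    refine ⟨by exact_mod_cast hP0, ?_⟩
    push_cast
    exact_mod_cast hP1
  | succ m ih =>
    obtain ⟨ih1, ih2⟩ := ih
    refine ⟨ih2, ?_⟩
    push_cast at ih1 ih2 ⊢
    -- pointwise identity
    have heq : ∀ x : ℝ, Real.cos (((m : ℝ) + 1 + 1) * x) / (Real.cosh t - Real.cos x)
        = (2 * Real.cosh t) * (Real.cos (((m : ℝ) + 1) * x) / (Real.cosh t - Real.cos x))
          - Real.cos ((m : ℝ) * x) / (Real.cosh t - Real.cos x)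
          - 2 * Real.cos (((m : ℝ) + 1) * x) := by
      intro x
      have hcos : Real.cos (((m : ℝ) + 1 + 1) * x)
          = 2 * Real.cos (((m : ℝ) + 1) * x) * Real.cos x - Real.cos ((m : ℝ) * x) := by
        have e1 : ((m : ℝ) + 1 + 1) * x = ((m : ℝ) + 1) * x + x := by ring
        have e2 : (m : ℝ) * x = ((m : ℝ) + 1) * x - x := by ring
        rw [e1, e2, Real.cos_add, Real.cos_sub]
        ring
      rw [hcos]
      field_simp [hD x]
      ring
    rw [intervalIntegral.integral_congr (fun x _ => heq x)]
    have i1 : IntervalIntegrable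
        (fun x => (2 * Real.cosh t) * (Real.cos (((m : ℝ) + 1) * x) / (Real.cosh t - Real.cos x)))
        volume (-π) π :=
      (integrableAux ht (fun x => Real.cos (((m : ℝ) + 1) * x)) (by fun_prop)).const_mul _
    have i2 : IntervalIntegrable
        (fun x => Real.cos ((m : ℝ) * x) / (Real.cosh t - Real.cos x)) volume (-π) π :=
      integrableAux ht (fun x => Real.cos ((m : ℝ) * x)) (by fun_prop)
    have i3 : IntervalIntegrable (fun x => 2 * Real.cos (((m : ℝ) + 1) * x)) volume (-π) π :=
      (Continuous.intervalIntegrable (by fun_prop) _ _)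
    rw [intervalIntegral.integral_sub (i1.sub i2) i3, intervalIntegral.integral_sub i1 i2,
      intervalIntegral.integral_const_mul, intervalIntegral.integral_const_mul, ih1, ih2]
    have hc0 : ∫ x in (-π)..π, Real.cos (((m : ℝ) + 1) * x) = 0 := by
      have := intCosZero (m + 1) (Nat.le_add_left 1 m)
      push_cast at this
      exact this
    rw [hc0, mul_zero, sub_zero]
    -- arithmetic
    have hexp1 : Real.exp (-((m : ℝ) + 1) * t) = Real.exp (-(m : ℝ) * t) * Real.exp (-t) := by
      rw [← Real.exp_add]; ring_nf
    have hexp2 : Real.exp (-((m : ℝ) + 1 + 1) * t)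
        = Real.exp (-(m : ℝ) * t) * Real.exp (-t) * Real.exp (-t) := by
      rw [← Real.exp_add, ← Real.exp_add]; ring_nf
    have hch : 2 * Real.cosh t * Real.exp (-t) = 1 + Real.exp (-t) * Real.exp (-t) := by
      rw [Real.cosh_eq]
      have : Real.exp t * Real.exp (-t) = 1 := by rw [← Real.exp_add]; simp
      nlinarith [this]
    rw [hexp1, hexp2]
    have he : Real.exp (-((m : ℝ) * t)) = Real.exp (-(m : ℝ) * t) := by rw [neg_mul]
    field_simp
    linear_combination hch

theorem couette_sin_kernel_integral (n : ℕ) (hn : 1 ≤ n) (y : ℝ) (hy : y ≠ 0) :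
    (1 / (4 * π)) *
        (∫ x in (-π)..π, (Real.sin x * Real.sin (n * x)) / (Real.cosh y - Real.cos x))
      = (1 / 2) * Real.exp (-(n : ℝ) * |y|) := by
  obtain ⟨m, rfl⟩ : ∃ m, n = m + 1 := ⟨n - 1, (Nat.succ_pred_eq_of_pos hn).symm⟩
  set t := |y| with htdef
  have ht : 0 < t := abs_pos.mpr hy
  have hs : 0 < Real.sinh t := Real.sinh_pos_iff.mpr ht
  have hD : ∀ x : ℝ, Real.cosh t - Real.cos x ≠ 0 := fun x => (denomPos ht x).ne'
  have hcosh : Real.cosh y = Real.cosh t := (Real.cosh_abs y).symm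
  rw [hcosh]
  have heq : ∀ x : ℝ, Real.sin x * Real.sin (((m + 1 : ℕ) : ℝ) * x) / (Real.cosh t - Real.cos x)
      = (1 / 2) * (Real.cos ((m : ℝ) * x) / (Real.cosh t - Real.cos x))
        - (1 / 2) * (Real.cos (((m : ℝ) + 2) * x) / (Real.cosh t - Real.cos x)) := by
    intro x
    have hprod : Real.cos ((m : ℝ) * x) - Real.cos (((m : ℝ) + 2) * x)
        = 2 * Real.sin (((m : ℝ) + 1) * x) * Real.sin x := by
      have e1 : (m : ℝ) * x = ((m : ℝ) + 1) * x - x := by ring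
      have e2 : ((m : ℝ) + 2) * x = ((m : ℝ) + 1) * x + x := by ring
      rw [e1, e2, Real.cos_sub, Real.cos_add]
      ring
    have hc : ((m + 1 : ℕ) : ℝ) = (m : ℝ) + 1 := by push_cast; ring
    rw [hc]
    field_simp [hD x]
    linear_combination -hprod + congrArg Real.cos (mul_comm x ((m:ℝ)+2))
  rw [intervalIntegral.integral_congr (fun x _ => heq x)]
  have i1 : IntervalIntegrable
      (fun x => (1 / 2 : ℝ) * (Real.cos ((m : ℝ) * x) / (Real.cosh t - Real.cos x)))
      volume (-π) π :=
    (integrableAux ht (fun x => Real.cos ((m : ℝ) * x)) (by fun_prop)).const_mul _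
  have i2 : IntervalIntegrable
      (fun x => (1 / 2 : ℝ) * (Real.cos (((m : ℝ) + 2) * x) / (Real.cosh t - Real.cos x)))
      volume (-π) π :=
    (integrableAux ht (fun x => Real.cos (((m : ℝ) + 2) * x)) (by fun_prop)).const_mul _
  rw [intervalIntegral.integral_sub i1 i2, intervalIntegral.integral_const_mul,
    intervalIntegral.integral_const_mul, Ik ht m]
  have h2 : ∫ x in (-π)..π, Real.cos (((m : ℝ) + 2) * x) / (Real.cosh t - Real.cos x)
      = 2 * π * Real.exp (-((m : ℝ) + 2) * t) / Real.sinh t := by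
    have := Ik ht (m + 2)
    push_cast at this
    exact this
  rw [h2]
  have hc2 : ((m + 1 : ℕ) : ℝ) = (m : ℝ) + 1 := by push_cast; ring
  rw [hc2]
  have hπ : (π : ℝ) ≠ 0 := Real.pi_ne_zero
  have hE1 : Real.exp (-(m : ℝ) * t) = Real.exp (-((m : ℝ) + 1) * t) * Real.exp t := by
    rw [← Real.exp_add]; ring_nf
  have hE2 : Real.exp (-((m : ℝ) + 2) * t) = Real.exp (-((m : ℝ) + 1) * t) * Real.exp (-t) := by
    rw [← Real.exp_add]; ring_nf
  have hne : Real.exp t - Real.exp (-t) ≠ 0 := by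
    rw [Real.sinh_eq] at hs
    intro h
    rw [h] at hs
    norm_num at hs
  rw [hE1, hE2, Real.sinh_eq]
  field_simp
  ring
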